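/- For any effect signature E and any type X, the map φ : E*X → S̄_E(X) defined recursively by φ (var x) = {ret x} and φ (node m t) = {op m} ∪ {m·n·s | n : ar m, s ∈ φ (t n)} is well-defined (every value of φ is a costrategy) and injective. -/
import Mathlib

universe u v w

inductive Coplay (E : Type u) (ar : E → Type v) (X : Type w) : Type (max u v w)
  | ret : X → Coplay E ar X
  | op : E → Coplay E ar X
  | cons : (m : E) → ar m → Coplay E ar X → Coplay E ar X

inductive Coplay.Prefix {E : Type u} {ar : E → Type v} {X : Type w} :
    Coplay E ar X → Coplay E ar X → Prop
  | ret (x : X) : Coplay.Prefix (.ret x) (.ret x)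
  | op (m : E) : Coplay.Prefix (.op m) (.op m)
  | op_cons (m : E) (n : ar m) (t : Coplay E ar X) :
      Coplay.Prefix (.op m) (.cons m n t)
  | cons (m : E) (n : ar m) {s t : Coplay E ar X} :
      Coplay.Prefix s t → Coplay.Prefix (.cons m n s) (.cons m n t)

inductive Coplay.Coh {E : Type u} {ar : E → Type v} {X : Type w} :
    Coplay E ar X → Coplay E ar X → Prop
  | ret (x : X) : Coplay.Coh (.ret x) (.ret x)
  | op (m : E) : Coplay.Coh (.op m) (.op m)
  | op_cons (m : E) (n : ar m) (s : Coplay E ar X) :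
      Coplay.Coh (.op m) (.cons m n s)
  | cons (m : E) (n₁ n₂ : ar m) (s₁ s₂ : Coplay E ar X) :
      (n₁ = n₂ → Coplay.Coh s₁ s₂) → Coplay.Coh (.cons m n₁ s₁) (.cons m n₂ s₂)

def IsCostrategy {E : Type u} {ar : E → Type v} {X : Type w}
    (σ : Set (Coplay E ar X)) : Prop :=
  (∀ s t : Coplay E ar X, Coplay.Prefix s t → t ∈ σ → s ∈ σ) ∧
  (∀ s ∈ σ, ∀ t ∈ σ, Coplay.Coh s t ∨ Coplay.Coh t s)

inductive Term (E : Type u) (ar : E → Type v) (V : Type w) : Type (max u v w)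
  | var : V → Term E ar V
  | node : (m : E) → (ar m → Term E ar V) → Term E ar V

def phi {E : Type u} {ar : E → Type v} {X : Type w} :
    Term E ar X → Set (Coplay E ar X)
  | .var x => {Coplay.ret x}
  | .node m t =>
      {Coplay.op m} ∪
        {s | ∃ (n : ar m) (u : Coplay E ar X), u ∈ phi (t n) ∧ s = Coplay.cons m n u}

lemma phi_wd {E : Type u} {ar : E → Type v} {X : Type w} :
    ∀ t : Term E ar X, IsCostrategy (phi t) := by
  intro t
  induction t with
  | var x =>
    constructor
    · intro s u hpre hu
      simp only [phi, Set.mem_singleton_iff] at hu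
      subst hu
      cases hpre
      rfl
    · intro s hs u hu
      simp only [phi, Set.mem_singleton_iff] at hs hu
      subst hs; subst hu
      exact Or.inl (.ret x)
  | node m t ih =>
    constructor
    · intro s u hpre hu
      rcases hu with hu | ⟨n, v, hv, rfl⟩
      · simp only [Set.mem_singleton_iff] at hu; subst hu
        cases hpre
        exact Or.inl rfl
      · cases hpre with
        | op_cons => exact Or.inl rfl
        | cons _ _ h => exact Or.inr ⟨n, _, (ih n).1 _ _ h hv, rfl⟩
    · intro s hs u hu
      rcases hs with hs | ⟨n, v, hv, rfl⟩ <;>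
        rcases hu with hu | ⟨n', v', hv', rfl⟩
      · simp only [Set.mem_singleton_iff] at hs hu; subst hs; subst hu
        exact Or.inl (.op m)
      · simp only [Set.mem_singleton_iff] at hs; subst hs
        exact Or.inl (.op_cons m n' v')
      · simp only [Set.mem_singleton_iff] at hu; subst hu
        exact Or.inr (.op_cons m n v)
      · by_cases h : n = n'
        · subst h
          rcases (ih n).2 v hv v' hv' with h | h
          · exact Or.inl (.cons m n n v v' (fun _ => h))
          · exact Or.inr (.cons m n n v' v (fun _ => h))
        · exact Or.inl (.cons m n n' v v' (fun he => absurd he h))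

lemma phi_inj {E : Type u} {ar : E → Type v} {X : Type w} :
    ∀ t t' : Term E ar X, phi t = phi t' → t = t' := by
  intro t
  induction t with
  | var x =>
    intro t' h
    cases t' with
    | var x' =>
      have : Coplay.ret x ∈ phi (Term.var (E := E) (ar := ar) x') := h ▸ rfl
      simp only [phi, Set.mem_singleton_iff, Coplay.ret.injEq] at this
      rw [this]
    | node m' u' =>
      exfalso
      have : Coplay.op m' ∈ phi (Term.var (E := E) (ar := ar) x) :=
        h ▸ Or.inl rfl
      simp only [phi, Set.mem_singleton_iff] at this
      cases this
  | node m t ih =>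
    intro t' h
    cases t' with
    | var x' =>
      exfalso
      have : Coplay.op m ∈ phi (Term.var (E := E) (ar := ar) x') :=
        h ▸ Or.inl rfl
      simp only [phi, Set.mem_singleton_iff] at this
      cases this
    | node m' u' =>
      have hm : m = m' := by
        have : Coplay.op m ∈ phi (Term.node m' u') := h ▸ Or.inl rfl
        rcases this with h1 | ⟨n, v, _, h2⟩
        · exact Coplay.op.inj h1
        · exact absurd h2 (by simp)
      subst hm
      congr 1
      funext n
      apply ih n
      ext v
      constructor
      · intro hv
        have : Coplay.cons m n v ∈ phi (Term.node m u') := h ▸ Or.inr ⟨n, v, hv, rfl⟩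
        rcases this with h1 | ⟨n', v', hv', h2⟩
        · exact absurd h1 (by simp)
        · obtain ⟨rfl, rfl⟩ : n' = n ∧ v' = v := by
            cases h2; exact ⟨rfl, rfl⟩
          exact hv'
      · intro hv
        have : Coplay.cons m n v ∈ phi (Term.node m t) := h ▸ Or.inr ⟨n, v, hv, rfl⟩
        rcases this with h1 | ⟨n', v', hv', h2⟩
        · exact absurd h1 (by simp)
        · obtain ⟨rfl, rfl⟩ : n' = n ∧ v' = v := by
            cases h2; exact ⟨rfl, rfl⟩
          exact hv'

theorem phi_wellDefined_injective (E : Type u) (ar : E → Type v) (X : Type w) :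
    (∀ t : Term E ar X, IsCostrategy (phi t)) ∧
    (∀ t t' : Term E ar X, phi t = phi t' → t = t') := by
  exact ⟨phi_wd, phi_inj⟩
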